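/- There is a universal constant c with the following property. Let b > 0, let d ≥ 1, let v_1,…,v_d be reals with v_j ≥ b for all j, and let g = Σ_{j=1}^d z_j v_j, where z_1,…,z_d are independent with P[z_j = 1] = P[z_j = −1] = 1/2. Then for every t ≥ 1 and every s ∈ ℝ: P[|g − s| ≤ t b] ≤ c · t / √d. -/

import Mathlib

namespace BKS

open Finset Filter

variable {ι : Type} [Fintype ι] [DecidableEq ι]

/-- Probability of an event under the uniform measure on `ι → Bool`. -/
noncomputable def cprob (A : Finset (ι → Bool)) : ℝ :=
  (A.card : ℝ) / 2 ^ Fintype.card ι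

/-- Expectation of a function under the uniform measure on `ι → Bool`. -/
noncomputable def cexpect (f : (ι → Bool) → ℝ) : ℝ :=
  (∑ x : ι → Bool, f x) / 2 ^ Fintype.card ι

/-- Real-valued indicator of an event. -/
noncomputable def indE (A : Finset (ι → Bool)) : (ι → Bool) → ℝ :=
  fun x => if x ∈ A then 1 else 0

/-- Transition kernel of the ε-noise: probability that `N_ε(x) = y`. -/
noncomputable def noiseKernel (ε : ℝ) (x y : ι → Bool) : ℝ :=
  ∏ j : ι, if y j = x j then 1 - ε else ε

/-- `P(N_ε(x) ∈ A | x)`. -/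
noncomputable def condProb (ε : ℝ) (A : Finset (ι → Bool)) (x : ι → Bool) : ℝ :=
  ∑ y ∈ A, noiseKernel ε x y

/-- Sensitivity gauge φ(A, ε) = inf{δ > 0 : P{x : |P(N_ε(x) ∈ A | x) − P(A)| > δ} < δ}. -/
noncomputable def gauge (ε : ℝ) (A : Finset (ι → Bool)) : ℝ :=
  sInf {δ : ℝ | 0 < δ ∧
    cprob (@Finset.filter _ (fun x => δ < |condProb ε A x - cprob A|)
      (Classical.decPred _) Finset.univ) < δ}

/-- Flip the `k`-th bit. -/
def flipBit (k : ι) (x : ι → Bool) : ι → Bool := Function.update x k (!x k)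

/-- Influence of the `k`-th variable: `I_k(f) = E|f(σ_k x) − f(x)|`. -/
noncomputable def influence (k : ι) (f : (ι → Bool) → ℝ) : ℝ :=
  cexpect fun x => |f (flipBit k x) - f x|

/-- `I(f) = Σ_k I_k(f)`. -/
noncomputable def totalInf (f : (ι → Bool) → ℝ) : ℝ := ∑ k : ι, influence k f

/-- `II(f) = Σ_k I_k(f)²`. -/
noncomputable def sqInf (f : (ι → Bool) → ℝ) : ℝ := ∑ k : ι, (influence k f) ^ 2

/-- `II(A)` for an event `A`. -/
noncomputable def sqInfE (A : Finset (ι → Bool)) : ℝ := sqInf (indE A)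

/-- A monotone (upward closed) event. -/
def MonotoneEvent (A : Finset (ι → Bool)) : Prop :=
  ∀ x y : ι → Bool, (∀ j, x j ≤ y j) → x ∈ A → y ∈ A

/-- Fourier–Walsh coefficient `f̂(S) = E[f · u_S]`, where `u_S(x) = (−1)^{|S ∩ x|}`. -/
noncomputable def walshFourier (f : (ι → Bool) → ℝ) (S : Finset ι) : ℝ :=
  cexpect fun x => f x * (-1 : ℝ) ^ (S.filter fun j => x j = true).card

/-- `Q_ε f (x) = E[f(N_ε(x))]`. -/
noncomputable def Qop (ε : ℝ) (f : (ι → Bool) → ℝ) (x : ι → Bool) : ℝ :=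
  ∑ y : ι → Bool, noiseKernel ε x y * f y

/-- `VAR(f, ε)`: variance of `x ↦ E[f(N_ε(x)) | x]`. -/
noncomputable def VAR (ε : ℝ) (f : (ι → Bool) → ℝ) : ℝ :=
  cexpect fun x => (Qop ε f x - cexpect (Qop ε f)) ^ 2

/-- `P[A △ N_ε A]`. -/
noncomputable def probSymmDiff (ε : ℝ) (A : Finset (ι → Bool)) : ℝ :=
  cexpect fun x => ∑ y : ι → Bool, noiseKernel ε x y *
    (if (x ∈ A) ↔ (y ∈ A) then 0 else 1)

/-- `P[A \ N_ε A]`. -/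
noncomputable def probOffDiff (ε : ℝ) (A : Finset (ι → Bool)) : ℝ :=
  cexpect fun x => ∑ y : ι → Bool, noiseKernel ε x y *
    (if x ∈ A ∧ y ∉ A then 1 else 0)

/-- Majority function on the set `K`: `M_K(x) = sign(Σ_{j∈K}(2x_j − 1))`. -/
noncomputable def majority (K : Finset ι) (x : ι → Bool) : ℝ :=
  Real.sign (∑ j ∈ K, (2 * (if x j then (1:ℝ) else 0) - 1))

/-- Weighted majority function `M_w(x) = sign(Σ_j (2x_j − 1) w_j)`. -/
noncomputable def wMajority (w : ι → ℝ) (x : ι → Bool) : ℝ :=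
  Real.sign (∑ j : ι, (2 * (if x j then (1:ℝ) else 0) - 1) * w j)

/-- The discrete cube Ω_n = {0,1}^n. -/
abbrev Cube (n : ℕ) := Fin n → Bool


lemma cb_sq (n : ℕ) : ((Nat.centralBinom n : ℝ))^2 * (2*n+1) ≤ 16^n := by
  induction n with
  | zero => simp [Nat.centralBinom]
  | succ n ih =>
    have key : ((n:ℝ)+1) * Nat.centralBinom (n+1) = 2 * (2*n+1) * Nat.centralBinom n := by
      exact_mod_cast Nat.succ_mul_centralBinom_succ n
    have key2 : (((n:ℝ)+1) * Nat.centralBinom (n+1))^2 = (2 * (2*(n:ℝ)+1) * Nat.centralBinom n)^2 := by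
      rw [key]
    have hpos : (0:ℝ) < ((n:ℝ)+1)^2 := by positivity
    rw [← mul_le_mul_iff_left₀ hpos]
    have hfac : (0:ℝ) ≤ 4*(2*(n:ℝ)+1)*(2*(n:ℝ)+3) := by positivity
    calc (Nat.centralBinom (n+1) : ℝ)^2 * (2*(n+1:ℕ)+1) * ((n:ℝ)+1)^2
        = (((n:ℝ)+1) * Nat.centralBinom (n+1))^2 * (2*(n:ℝ)+3) := by push_cast; ring
      _ = (2 * (2*(n:ℝ)+1) * Nat.centralBinom n)^2 * (2*(n:ℝ)+3) := by rw [key2]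
      _ = (4*(2*(n:ℝ)+1)*(2*(n:ℝ)+3)) * ((Nat.centralBinom n : ℝ)^2 * (2*n+1)) := by ring
      _ ≤ (4*(2*(n:ℝ)+1)*(2*(n:ℝ)+3)) * 16^n := by
          exact mul_le_mul_of_nonneg_left ih hfac
      _ ≤ (16*((n:ℝ)+1)^2) * 16^n := by
          apply mul_le_mul_of_nonneg_right _ (by positivity)
          nlinarith
      _ = 16^(n+1) * ((n:ℝ)+1)^2 := by rw [pow_succ]; ring

lemma cb_le (n : ℕ) : (Nat.centralBinom n : ℝ) * Real.sqrt (2*n+1) ≤ 4^n := by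
  have h2 : (0:ℝ) ≤ 2*n+1 := by positivity
  have hsq : ((Nat.centralBinom n : ℝ) * Real.sqrt (2*n+1))^2 ≤ ((4:ℝ)^n)^2 := by
    rw [mul_pow, Real.sq_sqrt h2]
    calc (Nat.centralBinom n : ℝ)^2 * (2*n+1) ≤ 16^n := cb_sq n
    _ = ((4:ℝ)^n)^2 := by rw [← pow_mul, pow_mul']; norm_num
  have ha : (0:ℝ) ≤ (Nat.centralBinom n : ℝ) * Real.sqrt (2*n+1) := by positivity
  exact (pow_le_pow_iff_left₀ ha (by positivity) (by norm_num)).mp hsq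

lemma choose_half (d : ℕ) (hd : 1 ≤ d) : (d.choose (d/2) : ℝ) * Real.sqrt d ≤ 2^d := by
  rcases Nat.even_or_odd d with ⟨n, hn⟩ | ⟨n, hn⟩
  · have hd2 : d = 2*n := by omega
    subst hd2
    have hn1 : 1 ≤ n := by omega
    have hch : (2*n).choose ((2*n)/2) = Nat.centralBinom n := by
      rw [Nat.centralBinom_eq_two_mul_choose]; congr 1; omega
    have hc : ((2*n:ℕ):ℝ) = 2*(n:ℝ) := by push_cast; ring
    rw [hch, hc]
    calc (Nat.centralBinom n : ℝ) * Real.sqrt (2*n)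
        ≤ (Nat.centralBinom n : ℝ) * Real.sqrt (2*n+1) := by
          apply mul_le_mul_of_nonneg_left (Real.sqrt_le_sqrt (by linarith)) (Nat.cast_nonneg _)
      _ ≤ 4^n := cb_le n
      _ = 2^(2*n) := by rw [pow_mul]; norm_num
  · have hd2 : d = 2*n+1 := by omega
    subst hd2
    have hch : (2*n+1).choose ((2*n+1)/2) ≤ 2 * Nat.centralBinom n := by
      have h0 : (2*n+1)/2 = n := by omega
      rw [h0]
      cases n with
      | zero => simp [Nat.centralBinom]
      | succ m =>
        have h2 : (2*(m+1)+1).choose (m+1) = (2*(m+1)).choose m + (2*(m+1)).choose (m+1) :=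
          Nat.choose_succ_succ _ _
        have ha := Nat.choose_le_centralBinom m (m+1)
        have hb := Nat.choose_le_centralBinom (m+1) (m+1)
        omega
    have hc : ((2*n+1:ℕ):ℝ) = 2*(n:ℝ)+1 := by push_cast; ring
    rw [hc]
    calc ((2*n+1).choose ((2*n+1)/2) : ℝ) * Real.sqrt (2*(n:ℝ)+1)
        ≤ (2 * Nat.centralBinom n : ℝ) * Real.sqrt (2*(n:ℝ)+1) := by
          apply mul_le_mul_of_nonneg_right _ (Real.sqrt_nonneg _)
          exact_mod_cast hch
      _ = 2 * ((Nat.centralBinom n : ℝ) * Real.sqrt (2*(n:ℝ)+1)) := by push_cast; ring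
      _ ≤ 2 * 4^n := by linarith [cb_le n]
      _ = 2^(2*n+1) := by rw [pow_succ, pow_mul]; ring

lemma toSet_inj {d : ℕ} : Function.Injective
    (fun z : Cube d => Finset.univ.filter (fun j => z j = true)) := by
  intro z w h
  funext j
  have hj := Finset.ext_iff.mp h j
  simp only [Finset.mem_filter, Finset.mem_univ, true_and] at hj
  cases hz : z j <;> cases hw : w j <;> simp_all

lemma fval {d : ℕ} (v : Fin d → ℝ) (z : Cube d) :
    (∑ j, (if z j then (1:ℝ) else -1) * v j)
      = 2 * ∑ j ∈ Finset.univ.filter (fun j => z j = true), v j - ∑ j, v j := by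
  rw [Finset.sum_filter, Finset.mul_sum, ← Finset.sum_sub_distrib]
  apply Finset.sum_congr rfl
  intro j _
  by_cases h : z j <;> simp [h] <;> ring

lemma slab_card {d : ℕ} (b : ℝ) (hb : 0 < b) (v : Fin d → ℝ) (hv : ∀ j, b ≤ v j) (a : ℝ) :
    (@Finset.filter _ (fun z : Cube d =>
        a ≤ (∑ j, (if z j then (1:ℝ) else -1) * v j) ∧
        (∑ j, (if z j then (1:ℝ) else -1) * v j) < a + 2*b)
      (Classical.decPred _) Finset.univ).card ≤ d.choose (d/2) := by
  classical
  set S := (@Finset.filter _ (fun z : Cube d =>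
        a ≤ (∑ j, (if z j then (1:ℝ) else -1) * v j) ∧
        (∑ j, (if z j then (1:ℝ) else -1) * v j) < a + 2*b)
      (Classical.decPred _) Finset.univ) with hS
  set toSet : Cube d → Finset (Fin d) := fun z => Finset.univ.filter (fun j => z j = true)
    with htoSet
  have hcard : S.card = (S.image toSet).card := (Finset.card_image_of_injective S toSet_inj).symm
  have hanti : IsAntichain (· ⊆ ·) ((S.image toSet : Finset (Finset (Fin d))) : Set (Finset (Fin d))) := by
    intro U hU V hV hne hsub
    simp only [Finset.coe_image, Set.mem_image, Finset.mem_coe] at hU hV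
    obtain ⟨z, hz, rfl⟩ := hU
    obtain ⟨w, hw, rfl⟩ := hV
    simp only [hS, Finset.mem_filter, Finset.mem_univ, true_and] at hz hw
    have hnonempty : (toSet w \ toSet z).Nonempty := by
      rw [Finset.sdiff_nonempty]
      intro h
      exact hne (Finset.Subset.antisymm hsub h)
    obtain ⟨j0, hj0⟩ := hnonempty
    have hsum : ∑ j ∈ toSet w \ toSet z, v j + ∑ j ∈ toSet z, v j = ∑ j ∈ toSet w, v j :=
      Finset.sum_sdiff hsub
    have hge : b ≤ ∑ j ∈ toSet w \ toSet z, v j := by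
      calc b ≤ v j0 := hv j0
        _ ≤ ∑ j ∈ toSet w \ toSet z, v j :=
          Finset.single_le_sum (fun i _ => le_trans hb.le (hv i)) hj0
    have hz2 := fval v z
    have hw2 := fval v w
    have h1 := hz.1
    have h2 := hw.2
    linarith
  have := IsAntichain.sperner hanti
  rw [Fintype.card_fin] at this
  rw [hcard]
  exact this

/-- Anticoncentration for signed sums with all weights at least b. -/
theorem anticoncentration_signed_sum :
    ∃ c : ℝ, ∀ b : ℝ, 0 < b → ∀ d : ℕ, 1 ≤ d →
      ∀ v : Fin d → ℝ, (∀ j, b ≤ v j) → ∀ t : ℝ, 1 ≤ t → ∀ s : ℝ,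
        cprob (@Finset.filter _
            (fun z : Cube d =>
              |(∑ j, (if z j then (1:ℝ) else -1) * v j) - s| ≤ t * b)
            (Classical.decPred _) Finset.univ) ≤ c * t / Real.sqrt d := by
  classical
  refine ⟨3, ?_⟩
  intro b hb d hd v hv t ht s
  set f : Cube d → ℝ := fun z => ∑ j, (if z j then (1:ℝ) else -1) * v j with hf
  set N : ℕ := Nat.floor t + 2 with hN
  set T := (@Finset.filter _
      (fun z : Cube d => |(∑ j, (if z j then (1:ℝ) else -1) * v j) - s| ≤ t * b)
      (Classical.decPred _) Finset.univ) with hT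
  have hsub : T ⊆ (Finset.range N).biUnion (fun i =>
      (@Finset.filter _ (fun z : Cube d =>
        (s - t*b + 2*b*i) ≤ (∑ j, (if z j then (1:ℝ) else -1) * v j) ∧
        (∑ j, (if z j then (1:ℝ) else -1) * v j) < (s - t*b + 2*b*i) + 2*b)
      (Classical.decPred _) Finset.univ)) := by
    intro z hz
    simp only [hT, Finset.mem_filter, Finset.mem_univ, true_and] at hz
    set x := ∑ j, (if z j then (1:ℝ) else -1) * v j with hx
    rw [abs_le] at hz
    have hb2 : (0:ℝ) < 2*b := by linarith
    set q : ℝ := (x - (s - t*b)) / (2*b) with hq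
    have hq0 : 0 ≤ q := by
      apply div_nonneg _ hb2.le
      linarith [hz.1]
    have hqt : q ≤ t := by
      rw [hq, div_le_iff₀ hb2]
      nlinarith [hz.2]
    have hi1 : ((Nat.floor q : ℕ) : ℝ) ≤ q := Nat.floor_le hq0
    have hi2 : q < (Nat.floor q : ℕ) + 1 := Nat.lt_floor_add_one q
    have hiN : Nat.floor q < N := by
      have : Nat.floor q ≤ Nat.floor t := Nat.floor_le_floor hqt
      omega
    rw [Finset.mem_biUnion]
    refine ⟨Nat.floor q, Finset.mem_range.mpr hiN, ?_⟩
    simp only [Finset.mem_filter, Finset.mem_univ, true_and]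
    constructor
    · have : 2*b*(Nat.floor q : ℝ) ≤ 2*b*q := by
        apply mul_le_mul_of_nonneg_left hi1 hb2.le
      have hqq : 2*b*q = x - (s - t*b) := by
        rw [hq]; field_simp
      linarith
    · have : 2*b*q < 2*b*((Nat.floor q : ℝ) + 1) := by
        apply mul_lt_mul_of_pos_left hi2 hb2
      have hqq : 2*b*q = x - (s - t*b) := by
        rw [hq]; field_simp
      linarith
  have hcardT : (T.card : ℝ) ≤ (N : ℝ) * (d.choose (d/2) : ℝ) := by
    have h1 : T.card ≤ ∑ i ∈ Finset.range N, ((@Finset.filter _ (fun z : Cube d =>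
        (s - t*b + 2*b*i) ≤ (∑ j, (if z j then (1:ℝ) else -1) * v j) ∧
        (∑ j, (if z j then (1:ℝ) else -1) * v j) < (s - t*b + 2*b*i) + 2*b)
      (Classical.decPred _) Finset.univ)).card :=
      le_trans (Finset.card_le_card hsub) (Finset.card_biUnion_le)
    have h2 : ∑ i ∈ Finset.range N, ((@Finset.filter _ (fun z : Cube d =>
        (s - t*b + 2*b*i) ≤ (∑ j, (if z j then (1:ℝ) else -1) * v j) ∧
        (∑ j, (if z j then (1:ℝ) else -1) * v j) < (s - t*b + 2*b*i) + 2*b)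
      (Classical.decPred _) Finset.univ)).card ≤ N * d.choose (d/2) := by
      calc _ ≤ ∑ _i ∈ Finset.range N, d.choose (d/2) :=
            Finset.sum_le_sum (fun i _ => slab_card b hb v hv _)
        _ = N * d.choose (d/2) := by rw [Finset.sum_const, Finset.card_range, smul_eq_mul]
    exact_mod_cast le_trans h1 h2
  have hd0 : (0:ℝ) < (d:ℝ) := by exact_mod_cast Nat.lt_of_lt_of_le Nat.zero_lt_one hd
  have hsd : (0:ℝ) < Real.sqrt d := Real.sqrt_pos.mpr hd0
  have h2d : (0:ℝ) < 2 ^ (Fintype.card (Fin d)) := by positivity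
  rw [cprob, div_le_div_iff₀ h2d hsd]
  rw [Fintype.card_fin]
  have hNt : (N : ℝ) ≤ t + 2 := by
    rw [hN]
    push_cast
    have := Nat.floor_le (le_trans zero_le_one ht)
    linarith
  calc (T.card : ℝ) * Real.sqrt d
      ≤ ((N : ℝ) * (d.choose (d/2) : ℝ)) * Real.sqrt d := by
        apply mul_le_mul_of_nonneg_right hcardT (Real.sqrt_nonneg _)
    _ = (N : ℝ) * ((d.choose (d/2) : ℝ) * Real.sqrt d) := by ring
    _ ≤ (N : ℝ) * 2^d := by
        apply mul_le_mul_of_nonneg_left (choose_half d hd) (Nat.cast_nonneg _)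
    _ ≤ (t + 2) * 2^d := by
        apply mul_le_mul_of_nonneg_right hNt (by positivity)
    _ ≤ (3*t) * 2^d := by
        apply mul_le_mul_of_nonneg_right (by linarith) (by positivity)
    _ = 3 * t * 2^d := by ring


end BKS
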